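/- Let α be a type of atoms, let G be a ground program over α in which every rule has a finite positive body, and let E ⊆ G be an embedding program for G. Then G and E have the same answer sets: AS(G) = AS(E). -/
import Mathlib


structure GroundRule (α : Type*) where
  head : Set α
  posBody : Set α
  negBody : Set α

namespace GroundRule

variable {α : Type*}

/-- `Heads R` is the set of all head atoms of rules in `R`. -/
def Heads (R : Set (GroundRule α)) : Set α := ⋃ r ∈ R, r.head

/-- `R` body-embeds `r` (written `R ⊢_b r`). -/
def BodyEmbeds (R : Set (GroundRule α)) (r : GroundRule α) : Prop :=
  ∀ a ∈ r.posBody, ∃ r' ∈ R, a ∈ r'.head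

/-- `R` embeds `r` (written `R ⊢ r`): either `R` does not body-embed `r`,
or `R` head-embeds `r` (i.e. `r ∈ R`). -/
def Embeds (R : Set (GroundRule α)) (r : GroundRule α) : Prop :=
  ¬ BodyEmbeds R r ∨ r ∈ R

/-- `E` is an embedding program for the ground program `G`. -/
def IsEmbeddingProgram (G E : Set (GroundRule α)) : Prop :=
  E ⊆ G ∧ ∀ r ∈ G, Embeds E r

/-- The fact rule `a.` for an atom `a`. -/
def factRule (a : α) : GroundRule α := ⟨{a}, ∅, ∅⟩

/-- `factRules F` is the set of fact rules `{a. : a ∈ F}`. -/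
def factRules (F : Set α) : Set (GroundRule α) := factRule '' F

/-- The instantiation operator `Inst(P, S) = {r ∈ P : B⁺(r) ⊆ S}`. -/
def Inst (P : Set (GroundRule α)) (S : Set α) : Set (GroundRule α) :=
  {r ∈ P | r.posBody ⊆ S}

/-- Interpretation `I` satisfies the body of `r`. -/
def SatBody (I : Set α) (r : GroundRule α) : Prop :=
  r.posBody ⊆ I ∧ r.negBody ∩ I = ∅

/-- Interpretation `I` satisfies the rule `r`. -/
def SatRule (I : Set α) (r : GroundRule α) : Prop :=
  ¬ SatBody I r ∨ (r.head ∩ I).Nonempty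

/-- `I` is a model of the ground program `G`. -/
def IsModel (I : Set α) (G : Set (GroundRule α)) : Prop :=
  ∀ r ∈ G, SatRule I r

/-- FLP reduct `G^I = {r ∈ G : I ⊨ B(r)}`. -/
def reduct (G : Set (GroundRule α)) (I : Set α) : Set (GroundRule α) :=
  {r ∈ G | SatBody I r}

/-- `A` is an answer set of `G`: `A` is a model of `G^A` minimal w.r.t. `⊆`. -/
def IsAnswerSet (G : Set (GroundRule α)) (A : Set α) : Prop :=
  IsModel A (reduct G A) ∧ ∀ B, B ⊂ A → ¬ IsModel B (reduct G A)

/-- `AS G` is the set of all answer sets of `G`. -/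
def AS (G : Set (GroundRule α)) : Set (Set α) := {A | IsAnswerSet G A}

theorem Heads_mono {R R' : Set (GroundRule α)} (h : R ⊆ R') : Heads R ⊆ Heads R' := by
  intro a ha
  simp only [Heads, Set.mem_iUnion, exists_prop] at ha ⊢
  obtain ⟨r, hr, har⟩ := ha
  exact ⟨r, h hr, har⟩

/-- The monotone operator `R ↦ Inst(P, Heads(R) ∪ F)`. -/
def InstOp (P : Set (GroundRule α)) (F : Set α) :
    Set (GroundRule α) →o Set (GroundRule α) where
  toFun R := Inst P (Heads R ∪ F)
  monotone' := fun _ _ h _ hr =>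
    ⟨hr.1, hr.2.trans (Set.union_subset_union_left F (Heads_mono h))⟩

/-- `Inst^∞(P, F)`: the least fixpoint of `R ↦ Inst(P, Heads(R) ∪ F)`. -/
def InstInf (P : Set (GroundRule α)) (F : Set α) : Set (GroundRule α) :=
  OrderHom.lfp (InstOp P F)

end GroundRule

open GroundRule

lemma mem_heads_iff {α : Type*} {E : Set (GroundRule α)} {a : α} :
    a ∈ Heads E ↔ ∃ r ∈ E, a ∈ r.head := by
  simp [Heads]

lemma subset_heads_aux {α : Type*} {P E : Set (GroundRule α)} {A : Set α}
    (hmod : IsModel A (reduct P A))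
    (hmin : ∀ B, B ⊂ A → ¬ IsModel B (reduct P A))
    (key : ∀ r ∈ reduct P A, r.posBody ⊆ Heads E → r ∈ E) :
    A ⊆ Heads E := by
  by_contra h
  have hsub : A ∩ Heads E ⊂ A := by
    refine ⟨Set.inter_subset_left, fun hAs => h (fun a ha => (hAs ha).2)⟩
  apply hmin _ hsub
  intro r hr
  by_cases hb : SatBody (A ∩ Heads E) r
  · right
    have hrE : r ∈ E := key r hr (hb.1.trans Set.inter_subset_right)
    obtain ⟨b, hbh, hbA⟩ := (hmod r hr).resolve_left (fun hc => hc hr.2)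
    exact ⟨b, hbh, hbA, mem_heads_iff.2 ⟨r, hrE, hbh⟩⟩
  · exact Or.inl hb

/-- a ground program `G` with finite positive bodies and any
embedding program `E` for `G` have the same answer sets. -/
theorem embedding_equivalence {α : Type*} (G E : Set (GroundRule α))
    (hfin : ∀ r ∈ G, r.posBody.Finite)
    (hE : IsEmbeddingProgram G E) :
    AS G = AS E := by
  obtain ⟨hEG, hEmb⟩ := hE
  ext A
  simp only [AS, Set.mem_setOf_eq, IsAnswerSet]
  have keyG : ∀ r ∈ reduct G A, r.posBody ⊆ Heads E → r ∈ E := by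
    intro r hr hsub
    rcases hEmb r hr.1 with h | h
    · exact absurd (fun a ha => mem_heads_iff.1 (hsub ha)) h
    · exact h
  constructor
  · rintro ⟨hmod, hmin⟩
    have hAH : A ⊆ Heads E := subset_heads_aux hmod hmin keyG
    refine ⟨fun r hr => hmod r ⟨hEG hr.1, hr.2⟩, ?_⟩
    intro B hB hBmod
    set C := B ∩ Heads E with hC
    have hCA : C ⊂ A := lt_of_le_of_lt Set.inter_subset_left hB
    apply hmin C hCA
    intro r hr
    by_cases hb : SatBody C r
    · right
      have hrE : r ∈ E := keyG r hr (hb.1.trans Set.inter_subset_right)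
      have hBr : SatBody B r := by
        refine ⟨hb.1.trans Set.inter_subset_left, ?_⟩
        have : r.negBody ∩ B ⊆ r.negBody ∩ A :=
          Set.inter_subset_inter_right _ hB.subset
        rw [hr.2.2] at this
        exact Set.subset_empty_iff.1 this
      obtain ⟨b, hbh, hbB⟩ :=
        (hBmod r ⟨hrE, hr.2⟩).resolve_left (fun hc => hc hBr)
      exact ⟨b, hbh, hbB, mem_heads_iff.2 ⟨r, hrE, hbh⟩⟩
    · exact Or.inl hb
  · rintro ⟨hmod, hmin⟩
    have hAH : A ⊆ Heads E :=
      subset_heads_aux hmod hmin (fun r hr _ => hr.1)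
    constructor
    · intro r hr
      by_cases hb : SatBody A r
      · have hrE : r ∈ E := keyG r hr (hb.1.trans hAH)
        exact hmod r ⟨hrE, hr.2⟩
      · exact Or.inl hb
    · intro B hB hBmod
      exact hmin B hB (fun r hr => hBmod r ⟨hEG hr.1, hr.2⟩)
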